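/- For all integers a ≥ 1, n ≥ 1 and all 1 ≤ i, j ≤ n, the number of words f : {1,…,n} → {1,…,a} such that pos(f,j) = i equals Σ_{k=1}^{a} Σ_{r=l}^{u} C(j-1, r)·C(n-j, i-r-1)·k^r·(a-k)^{j-1-r}·(k-1)^{i-1-r}·(a-k+1)^{(n-j)-(i-r-1)}, where l = max(0, (i+j)-(n+1)) and u = min(i-1, j-1). Consequently, the probability P_a(i,j) that an a-shuffle moves the card at position i to position j equals this sum divided by a^n. -/

import Mathlib

/-- Bayer–Diaconis encoding: for a shuffle word `f : Fin n → Fin a`, the card at final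
position `i` (1-based value `i+1`) originally occupied position
`pos f i = n_1 + ⋯ + n_{f(i)-1} + c_{f(i)}(i)` (a 1-based position in `{1,…,n}`),
where `n_k` is the number of letters equal to `k` and `c_k(i)` the number of `j ≤ i`
with `f j = k`. -/
def pos {n a : ℕ} (f : Fin n → Fin a) (i : Fin n) : ℕ :=
  (Finset.univ.filter fun j => f j < f i).card +
    (Finset.univ.filter fun j => j ≤ i ∧ f j = f i).card

open Finset

section aux
variable {n a : ℕ}

def Sset (j0 : Fin n) (k0 : Fin a) (f : Fin n → Fin a) : Finset (Fin n) :=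
  Finset.univ.filter fun x => x < j0 ∧ f x ≤ k0

def Tset (j0 : Fin n) (k0 : Fin a) (f : Fin n → Fin a) : Finset (Fin n) :=
  Finset.univ.filter fun x => j0 < x ∧ f x < k0

lemma Sset_subset (j0 : Fin n) (k0 : Fin a) (f : Fin n → Fin a) :
    Sset j0 k0 f ⊆ Finset.Iio j0 := by
  intro x hx
  simp only [Sset, mem_filter] at hx
  simpa using hx.2.1

lemma Tset_subset (j0 : Fin n) (k0 : Fin a) (f : Fin n → Fin a) :
    Tset j0 k0 f ⊆ Finset.Ioi j0 := by
  intro x hx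
  simp only [Tset, mem_filter] at hx
  simpa using hx.2.1

lemma pos_eq (j0 : Fin n) (k0 : Fin a) (f : Fin n → Fin a) (hf : f j0 = k0) :
    pos f j0 = (Sset j0 k0 f).card + (Tset j0 k0 f).card + 1 := by
  classical
  unfold pos Sset Tset
  rw [hf]
  simp only [Finset.card_filter]
  rw [← Finset.sum_add_distrib, ← Finset.sum_add_distrib]
  have h1 : (1 : ℕ) = ∑ x : Fin n, if x = j0 then 1 else 0 := by
    rw [Finset.sum_ite_eq' Finset.univ j0 (fun _ => 1)]
    simp
  rw [h1, ← Finset.sum_add_distrib]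
  apply Finset.sum_congr rfl
  intro x _
  rcases lt_trichotomy x j0 with h | h | h
  · have hne : x ≠ j0 := ne_of_lt h
    have hle : x ≤ j0 := le_of_lt h
    rcases lt_trichotomy (f x) k0 with h2 | h2 | h2
    · simp [h, hne, hle, h2, le_of_lt h2, not_lt.mpr (le_of_lt h), ne_of_lt h2]
    · simp [h, hne, hle, h2, le_of_eq h2, not_lt.mpr (le_of_lt h), lt_irrefl]
    · simp [h, hne, hle, not_lt.mpr (le_of_lt h2), not_le.mpr h2, (ne_of_lt h2).symm,
        not_lt.mpr (le_of_lt h)]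
  · subst h
    simp [hf, lt_irrefl]
  · have hne : x ≠ j0 := (ne_of_lt h).symm
    have hnle : ¬ x ≤ j0 := not_le.mpr h
    rcases lt_trichotomy (f x) k0 with h2 | h2 | h2
    · simp [hne, hnle, h2, not_lt.mpr (le_of_lt h), h]
    · simp [hne, hnle, h2, not_lt.mpr (le_of_lt h), h, lt_irrefl]
    · simp [hne, hnle, not_lt.mpr (le_of_lt h2), not_lt.mpr (le_of_lt h), h]

lemma fiber_sub_count (j0 : Fin n) (k0 : Fin a) (S T : Finset (Fin n))
    (hS : S ⊆ Finset.Iio j0) (hT : T ⊆ Finset.Ioi j0) :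
    (Finset.univ.filter fun f : Fin n → Fin a =>
        f j0 = k0 ∧ Sset j0 k0 f = S ∧ Tset j0 k0 f = T).card =
      ((k0 : ℕ) + 1) ^ S.card * (a - 1 - k0) ^ ((j0 : ℕ) - S.card) *
        (k0 : ℕ) ^ T.card * (a - (k0 : ℕ)) ^ ((n - 1 - (j0 : ℕ)) - T.card) := by
  classical
  set g : Fin n → Finset (Fin a) := fun x =>
    if x < j0 then (if x ∈ S then Finset.Iic k0 else Finset.Ioi k0)
    else if j0 < x then (if x ∈ T then Finset.Iio k0 else Finset.Ici k0)
    else {k0} with hg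
  have hset : (Finset.univ.filter fun f : Fin n → Fin a =>
      f j0 = k0 ∧ Sset j0 k0 f = S ∧ Tset j0 k0 f = T) = Fintype.piFinset g := by
    ext f
    simp only [mem_filter, Finset.mem_univ, true_and, Fintype.mem_piFinset]
    constructor
    · rintro ⟨h0, hSf, hTf⟩
      intro x
      rcases lt_trichotomy x j0 with h | h | h
      · simp only [hg, h, if_pos]
        by_cases hxS : x ∈ S
        · rw [if_pos hxS]
          rw [← hSf] at hxS
          simp only [Sset, mem_filter] at hxS
          simpa using hxS.2.2
        · rw [if_neg hxS]
          rw [← hSf] at hxS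
          simp only [Sset, mem_filter, Finset.mem_univ, true_and] at hxS
          push_neg at hxS
          simpa using hxS h
      · subst h
        simp [hg, h0]
      · have hnx : ¬ x < j0 := lt_asymm h
        simp only [hg, if_neg hnx, if_pos h]
        by_cases hxT : x ∈ T
        · rw [if_pos hxT]
          rw [← hTf] at hxT
          simp only [Tset, mem_filter] at hxT
          simpa using hxT.2.2
        · rw [if_neg hxT]
          rw [← hTf] at hxT
          simp only [Tset, mem_filter, Finset.mem_univ, true_and] at hxT
          push_neg at hxT
          simpa using hxT h
    · intro hx
      have h0 : f j0 = k0 := by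
        have := hx j0
        simpa [hg, lt_irrefl] using this
      refine ⟨h0, ?_, ?_⟩
      · ext x
        simp only [Sset, mem_filter, Finset.mem_univ, true_and]
        constructor
        · rintro ⟨hlt, hle⟩
          by_contra hxS
          have := hx x
          simp only [hg, if_pos hlt, if_neg hxS, Finset.mem_Ioi] at this
          exact absurd hle (not_le.mpr this)
        · intro hxS
          have hlt : x < j0 := by simpa using hS hxS
          have := hx x
          simp only [hg, if_pos hlt, if_pos hxS, Finset.mem_Iic] at this
          exact ⟨hlt, this⟩
      · ext x
        simp only [Tset, mem_filter, Finset.mem_univ, true_and]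
        constructor
        · rintro ⟨hlt, hle⟩
          by_contra hxT
          have := hx x
          simp only [hg, if_neg (lt_asymm hlt), if_pos hlt, if_neg hxT,
            Finset.mem_Ici] at this
          exact absurd hle (not_lt.mpr this)
        · intro hxT
          have hlt : j0 < x := by simpa using hT hxT
          have := hx x
          simp only [hg, if_neg (lt_asymm hlt), if_pos hlt, if_pos hxT,
            Finset.mem_Iio] at this
          exact ⟨hlt, this⟩
  rw [hset, Fintype.card_piFinset]
  have huniv : (Finset.univ : Finset (Fin n)) = (Finset.Iio j0) ∪ (Finset.Ici j0) := by
    ext x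
    simp [lt_or_ge x j0]
  have hdisj : Disjoint (Finset.Iio j0) (Finset.Ici j0) := by
    simp [Finset.disjoint_left]
  rw [huniv, Finset.prod_union hdisj, Finset.Ici_eq_cons_Ioi, Finset.prod_cons]
  have hIio : ∏ x ∈ Finset.Iio j0, (g x).card =
      ((k0 : ℕ) + 1) ^ S.card * (a - 1 - k0) ^ ((j0 : ℕ) - S.card) := by
    rw [← Finset.prod_sdiff hS]
    have h1 : ∏ x ∈ S, (g x).card = ((k0 : ℕ) + 1) ^ S.card := by
      rw [← Finset.prod_const]
      apply Finset.prod_congr rfl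
      intro x hx
      have hlt : x < j0 := by simpa using hS hx
      simp [hg, hlt, hx, Fin.card_Iic]
    have h2 : ∏ x ∈ Finset.Iio j0 \ S, (g x).card = (a - 1 - k0) ^ ((j0 : ℕ) - S.card) := by
      have hc : (Finset.Iio j0 \ S).card = (j0 : ℕ) - S.card := by
        rw [Finset.card_sdiff_of_subset hS, Fin.card_Iio]
      rw [← hc, ← Finset.prod_const]
      apply Finset.prod_congr rfl
      intro x hx
      rw [Finset.mem_sdiff] at hx
      have hlt : x < j0 := by simpa using hx.1
      simp [hg, hlt, hx.2, Fin.card_Ioi]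
    rw [h1, h2]; ring
  have hIoi : ∏ x ∈ Finset.Ioi j0, (g x).card =
      (k0 : ℕ) ^ T.card * (a - (k0 : ℕ)) ^ ((n - 1 - (j0 : ℕ)) - T.card) := by
    rw [← Finset.prod_sdiff hT]
    have h1 : ∏ x ∈ T, (g x).card = (k0 : ℕ) ^ T.card := by
      rw [← Finset.prod_const]
      apply Finset.prod_congr rfl
      intro x hx
      have hlt : j0 < x := by simpa using hT hx
      simp [hg, hlt, lt_asymm hlt, hx, Fin.card_Iio]
    have h2 : ∏ x ∈ Finset.Ioi j0 \ T, (g x).card =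
        (a - (k0 : ℕ)) ^ ((n - 1 - (j0 : ℕ)) - T.card) := by
      have hc : (Finset.Ioi j0 \ T).card = (n - 1 - (j0 : ℕ)) - T.card := by
        rw [Finset.card_sdiff_of_subset hT, Fin.card_Ioi]
      rw [← hc, ← Finset.prod_const]
      apply Finset.prod_congr rfl
      intro x hx
      rw [Finset.mem_sdiff] at hx
      have hlt : j0 < x := by simpa using hx.1
      simp [hg, hlt, lt_asymm hlt, hx.2, Fin.card_Ici]
    rw [h1, h2]; ring
  have hj0 : (g j0).card = 1 := by simp [hg, lt_irrefl]
  rw [hIio, hj0, hIoi]; ring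

lemma fiber_count (j0 : Fin n) (k0 : Fin a) (r t : ℕ) :
    (Finset.univ.filter fun f : Fin n → Fin a =>
        f j0 = k0 ∧ (Sset j0 k0 f).card = r ∧ (Tset j0 k0 f).card = t).card =
      Nat.choose (j0 : ℕ) r * Nat.choose (n - 1 - (j0 : ℕ)) t *
        (((k0 : ℕ) + 1) ^ r * (a - 1 - k0) ^ ((j0 : ℕ) - r) *
          (k0 : ℕ) ^ t * (a - (k0 : ℕ)) ^ ((n - 1 - (j0 : ℕ)) - t)) := by
  classical
  rw [Finset.card_eq_sum_card_fiberwise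
    (f := fun f => (Sset j0 k0 f, Tset j0 k0 f))
    (t := Finset.powersetCard r (Finset.Iio j0) ×ˢ Finset.powersetCard t (Finset.Ioi j0))
    (by
      intro f hf
      simp only [Finset.mem_coe, mem_filter] at hf
      simp only [Finset.mem_coe, Finset.mem_product, Finset.mem_powersetCard]
      exact ⟨⟨Sset_subset j0 k0 f, hf.2.2.1⟩, ⟨Tset_subset j0 k0 f, hf.2.2.2⟩⟩)]
  have hterm : ∀ p ∈ Finset.powersetCard r (Finset.Iio j0) ×ˢ
      Finset.powersetCard t (Finset.Ioi j0),
      (Finset.filter (fun f => (Sset j0 k0 f, Tset j0 k0 f) = p)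
        (Finset.univ.filter fun f : Fin n → Fin a =>
          f j0 = k0 ∧ (Sset j0 k0 f).card = r ∧ (Tset j0 k0 f).card = t)).card =
      (((k0 : ℕ) + 1) ^ r * (a - 1 - k0) ^ ((j0 : ℕ) - r) *
        (k0 : ℕ) ^ t * (a - (k0 : ℕ)) ^ ((n - 1 - (j0 : ℕ)) - t)) := by
    rintro ⟨S, T⟩ hp
    simp only [Finset.mem_product, Finset.mem_powersetCard] at hp
    obtain ⟨⟨hS, hSc⟩, ⟨hT, hTc⟩⟩ := hp
    have : (Finset.filter (fun f => (Sset j0 k0 f, Tset j0 k0 f) = (S, T))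
        (Finset.univ.filter fun f : Fin n → Fin a =>
          f j0 = k0 ∧ (Sset j0 k0 f).card = r ∧ (Tset j0 k0 f).card = t)) =
        (Finset.univ.filter fun f : Fin n → Fin a =>
          f j0 = k0 ∧ Sset j0 k0 f = S ∧ Tset j0 k0 f = T) := by
      ext f
      simp only [Finset.filter_filter, mem_filter, Finset.mem_univ, true_and, Prod.mk.injEq]
      constructor
      · rintro ⟨⟨h0, _, _⟩, hS', hT'⟩
        exact ⟨h0, hS', hT'⟩
      · rintro ⟨h0, hS', hT'⟩
        exact ⟨⟨h0, by rw [hS', hSc], by rw [hT', hTc]⟩, hS', hT'⟩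
    rw [this, fiber_sub_count j0 k0 S T hS hT, hSc, hTc]
  rw [Finset.sum_congr rfl hterm, Finset.sum_const, Finset.card_product,
    Finset.card_powersetCard, Finset.card_powersetCard, Fin.card_Iio, Fin.card_Ioi,
    smul_eq_mul, mul_assoc]

end aux

/-- The number of shuffle words `f : {1,…,n} → {1,…,a}` with `pos(f,j) = i` is given by the
explicit double sum; consequently `P_a(i,j)`, the probability that an `a`-shuffle moves the
card at position `i` to position `j`, is this sum divided by `a^n`. -/
theorem statement0 (a n : ℕ) (ha : 1 ≤ a) (hn : 1 ≤ n) (i j : ℕ)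
    (hi1 : 1 ≤ i) (hi2 : i ≤ n) (hj1 : 1 ≤ j) (hj2 : j ≤ n) :
    (Finset.univ.filter fun f : Fin n → Fin a =>
        pos f (⟨j - 1, by omega⟩ : Fin n) = i).card =
      (∑ k ∈ Finset.Icc 1 a, ∑ r ∈ Finset.Icc (max 0 ((i + j) - (n + 1))) (min (i-1) (j-1)),
        Nat.choose (j-1) r * Nat.choose (n-j) (i-r-1) * k ^ r * (a-k) ^ (j-1-r) *
          (k-1) ^ (i-1-r) * (a-k+1) ^ ((n-j) - (i-r-1))) ∧
    (((Finset.univ.filter fun f : Fin n → Fin a =>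
        pos f (⟨j - 1, by omega⟩ : Fin n) = i).card : ℝ) / (a : ℝ) ^ n =
      ((∑ k ∈ Finset.Icc 1 a, ∑ r ∈ Finset.Icc (max 0 ((i + j) - (n + 1))) (min (i-1) (j-1)),
        Nat.choose (j-1) r * Nat.choose (n-j) (i-r-1) * k ^ r * (a-k) ^ (j-1-r) *
          (k-1) ^ (i-1-r) * (a-k+1) ^ ((n-j) - (i-r-1)) : ℕ) : ℝ) / (a : ℝ) ^ n) := by
  classical
  set j0 : Fin n := ⟨j - 1, by omega⟩ with hj0
  have hj0v : (j0 : ℕ) = j - 1 := rfl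
  have key : (Finset.univ.filter fun f : Fin n → Fin a => pos f j0 = i).card =
      (∑ k ∈ Finset.Icc 1 a, ∑ r ∈ Finset.Icc (max 0 ((i + j) - (n + 1))) (min (i-1) (j-1)),
        Nat.choose (j-1) r * Nat.choose (n-j) (i-r-1) * k ^ r * (a-k) ^ (j-1-r) *
          (k-1) ^ (i-1-r) * (a-k+1) ^ ((n-j) - (i-r-1))) := by
    rw [Finset.card_eq_sum_card_fiberwise
      (f := fun f => (f j0, (Sset j0 (f j0) f).card))
      (t := (Finset.univ : Finset (Fin a)) ×ˢ Finset.range n)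
      (by
        intro f _
        simp only [Finset.mem_coe, Finset.mem_product, Finset.mem_univ, Finset.mem_range, true_and]
        have := Finset.card_le_card (Sset_subset j0 (f j0) f)
        rw [Fin.card_Iio] at this
        omega)]
    rw [Finset.sum_product]
    -- inner fiber computation
    have hfib : ∀ (k0 : Fin a) (r : ℕ),
        (Finset.filter (fun f => (f j0, (Sset j0 (f j0) f).card) = (k0, r))
          (Finset.univ.filter fun f : Fin n → Fin a => pos f j0 = i)).card =
        if r ∈ Finset.Icc (max 0 ((i + j) - (n + 1))) (min (i-1) (j-1)) then
          Nat.choose (j-1) r * Nat.choose (n-j) (i-r-1) * ((k0:ℕ)+1) ^ r *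
            (a-1-(k0:ℕ)) ^ (j-1-r) * (k0:ℕ) ^ (i-1-r) * (a-(k0:ℕ)) ^ ((n-j) - (i-r-1))
        else 0 := by
      intro k0 r
      by_cases hr : r ∈ Finset.Icc (max 0 ((i + j) - (n + 1))) (min (i-1) (j-1))
      · rw [if_pos hr]
        simp only [Finset.mem_Icc, le_max_iff, max_le_iff, le_min_iff] at hr
        have hru : r ≤ i - 1 ∧ r ≤ j - 1 := ⟨hr.2.1, hr.2.2⟩
        have hrl : i + j - (n+1) ≤ r := hr.1.2
        have heq : (Finset.filter (fun f => (f j0, (Sset j0 (f j0) f).card) = (k0, r))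
            (Finset.univ.filter fun f : Fin n → Fin a => pos f j0 = i)) =
            (Finset.univ.filter fun f : Fin n → Fin a =>
              f j0 = k0 ∧ (Sset j0 k0 f).card = r ∧ (Tset j0 k0 f).card = i - 1 - r) := by
          ext f
          simp only [Finset.filter_filter, mem_filter, Finset.mem_univ, true_and,
            Prod.mk.injEq]
          constructor
          · rintro ⟨hpos, h0, hSr⟩
            rw [h0] at hSr
            refine ⟨h0, hSr, ?_⟩
            rw [pos_eq j0 k0 f h0, hSr] at hpos
            omega
          · rintro ⟨h0, hSr, hTr⟩
            refine ⟨?_, h0, by rw [h0]; exact hSr⟩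
            rw [pos_eq j0 k0 f h0, hSr, hTr]
            omega
        rw [heq, fiber_count j0 k0 r (i - 1 - r)]
        have e1 : (j0 : ℕ) = j - 1 := rfl
        have e2 : n - 1 - (j0 : ℕ) = n - j := by rw [e1]; omega
        have e3 : i - 1 - r = i - r - 1 := by omega
        rw [e2, e1, e3]
        ring
      · rw [if_neg hr]
        rw [Finset.card_eq_zero, Finset.eq_empty_iff_forall_notMem]
        intro f hf
        simp only [Finset.filter_filter, mem_filter, Finset.mem_univ, true_and,
          Prod.mk.injEq] at hf
        obtain ⟨hpos, h0, hSr⟩ := hf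
        rw [h0] at hSr
        rw [pos_eq j0 k0 f h0, hSr] at hpos
        have hSb : r ≤ j - 1 := by
          rw [← hSr]
          have := Finset.card_le_card (Sset_subset j0 k0 f)
          rw [Fin.card_Iio] at this
          exact this
        have hTb : (Tset j0 k0 f).card ≤ n - j := by
          have := Finset.card_le_card (Tset_subset j0 k0 f)
          rw [Fin.card_Ioi, hj0v] at this
          omega
        simp only [Finset.mem_Icc, le_max_iff, max_le_iff, le_min_iff, not_and_or,
          not_le] at hr
        omega
    rw [Finset.sum_congr rfl (fun k0 _ => Finset.sum_congr rfl (fun r _ => hfib k0 r))]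
    have hinner : ∀ k0 : Fin a, ∑ r ∈ Finset.range n,
        (if r ∈ Finset.Icc (max 0 ((i + j) - (n + 1))) (min (i-1) (j-1)) then
          Nat.choose (j-1) r * Nat.choose (n-j) (i-r-1) * ((k0:ℕ)+1) ^ r *
            (a-1-(k0:ℕ)) ^ (j-1-r) * (k0:ℕ) ^ (i-1-r) * (a-(k0:ℕ)) ^ ((n-j) - (i-r-1))
        else 0) =
        ∑ r ∈ Finset.Icc (max 0 ((i + j) - (n + 1))) (min (i-1) (j-1)),
          Nat.choose (j-1) r * Nat.choose (n-j) (i-r-1) * ((k0:ℕ)+1) ^ r *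
            (a-1-(k0:ℕ)) ^ (j-1-r) * (k0:ℕ) ^ (i-1-r) * (a-(k0:ℕ)) ^ ((n-j) - (i-r-1)) := by
      intro k0
      rw [← Finset.sum_filter]
      apply Finset.sum_congr ?_ (fun _ _ => rfl)
      ext r
      simp only [Finset.mem_filter, Finset.mem_range, Finset.mem_Icc]
      omega
    rw [Finset.sum_congr rfl (fun k0 _ => hinner k0)]
    -- reindex k0 : Fin a to k ∈ Icc 1 a
    have hre : ∑ k0 : Fin a, ∑ r ∈ Finset.Icc (max 0 ((i + j) - (n + 1))) (min (i-1) (j-1)),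
        Nat.choose (j-1) r * Nat.choose (n-j) (i-r-1) * ((k0:ℕ)+1) ^ r *
          (a-1-(k0:ℕ)) ^ (j-1-r) * (k0:ℕ) ^ (i-1-r) * (a-(k0:ℕ)) ^ ((n-j) - (i-r-1)) =
        ∑ k ∈ Finset.Icc 1 a, ∑ r ∈ Finset.Icc (max 0 ((i + j) - (n + 1))) (min (i-1) (j-1)),
          Nat.choose (j-1) r * Nat.choose (n-j) (i-r-1) * k ^ r * (a-k) ^ (j-1-r) *
            (k-1) ^ (i-1-r) * (a-k+1) ^ ((n-j) - (i-r-1)) := by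
      rw [Fin.sum_univ_eq_sum_range (fun m =>
        ∑ r ∈ Finset.Icc (max 0 ((i + j) - (n + 1))) (min (i-1) (j-1)),
          Nat.choose (j-1) r * Nat.choose (n-j) (i-r-1) * (m+1) ^ r *
            (a-1-m) ^ (j-1-r) * m ^ (i-1-r) * (a-m) ^ ((n-j) - (i-r-1))) a]
      have : Finset.Icc 1 a = Finset.Ico 1 (a+1) := by
        ext x; simp [Finset.mem_Icc, Finset.mem_Ico]
      rw [this, Finset.sum_Ico_eq_sum_range]
      simp only [Nat.add_sub_cancel]
      apply Finset.sum_congr rfl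
      intro m hm
      rw [Finset.mem_range] at hm
      apply Finset.sum_congr rfl
      intro r _
      have e1 : 1 + m = m + 1 := by omega
      have e2 : a - (m + 1) = a - 1 - m := by omega
      have e3 : m + 1 - 1 = m := by omega
      have e4 : a - 1 - m + 1 = a - m := by omega
      rw [e1, e2, e3, e4]
    exact hre
  refine ⟨key, by rw [key]⟩
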